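/- Let E be a vector space over 𝕂 = ℝ or ℂ with a Hamel basis, and for 1 ≤ p < ∞ equip E with the p-norm ‖u‖_p = (Σ_k |α_k|^p)^{1/p}, where the α_k are the coordinates of u in the basis. Then (E, ‖·‖_p) is a Banach space if and only if E is finite-dimensional. -/

import Mathlib

/-- `u` is a Cauchy sequence with respect to the norm function `n`. -/
def IsCauchyWith {E : Type*} [AddCommGroup E] (n : E → ℝ) (u : ℕ → E) : Prop :=
  ∀ ε > (0 : ℝ), ∃ N : ℕ, ∀ m ≥ N, ∀ k ≥ N, n (u m - u k) < ε

/-- `E` is complete with respect to the norm function `n`. -/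
def CompleteWith {E : Type*} [AddCommGroup E] (n : E → ℝ) : Prop :=
  ∀ u : ℕ → E, IsCauchyWith n u →
    ∃ l : E, ∀ ε > (0 : ℝ), ∃ N : ℕ, ∀ m ≥ N, n (u m - l) < ε

private lemma addTwoRpow {p : ℝ} (hp : 1 ≤ p) {a b : ℝ} (ha : 0 ≤ a) (hb : 0 ≤ b) :
    a ^ p + b ^ p ≤ (a + b) ^ p := by
  lift a to NNReal using ha
  lift b to NNReal using hb
  exact_mod_cast NNReal.add_rpow_le_rpow_add a b hp

private lemma sumRpowLe {p : ℝ} (hp : 1 ≤ p) {α : Type*} (s : Finset α) (f : α → ℝ)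
    (hf : ∀ i, 0 ≤ f i) : ∑ i ∈ s, f i ^ p ≤ (∑ i ∈ s, f i) ^ p := by
  classical
  induction s using Finset.cons_induction with
  | empty => simp [Real.zero_rpow (by linarith : p ≠ 0)]
  | cons a s ha ih =>
      rw [Finset.sum_cons, Finset.sum_cons]
      calc f a ^ p + ∑ i ∈ s, f i ^ p ≤ f a ^ p + (∑ i ∈ s, f i) ^ p := by
            exact add_le_add_right ih _
        _ ≤ (f a + ∑ i ∈ s, f i) ^ p :=
            addTwoRpow hp (hf a) (Finset.sum_nonneg fun i _ => hf i)

/-- for a Hamel basis `b` of `E` and `1 ≤ p < ∞`, the `p`-norm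
`‖u‖_p = (Σ |α_k|^p)^(1/p)` (with `α` the coordinates of `u` in `b`) makes `E`
complete iff `E` is finite-dimensional. -/
theorem stmt19 {𝕜 E ι : Type*} [RCLike 𝕜] [AddCommGroup E] [Module 𝕜 E]
    (b : Module.Basis ι 𝕜 E) (p : ℝ) (hp : 1 ≤ p) :
    CompleteWith
        (fun u : E => (∑ k ∈ (b.repr u).support, ‖b.repr u k‖ ^ p) ^ (1 / p)) ↔
      FiniteDimensional 𝕜 E := by
  classical
  have hp0 : (0 : ℝ) < p := lt_of_lt_of_le one_pos hp
  have hpne : p ≠ 0 := hp0.ne'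
  set n : E → ℝ := fun u : E => (∑ k ∈ (b.repr u).support, ‖b.repr u k‖ ^ p) ^ (1 / p)
    with hn
  -- nonnegativity of n
  have hsum0 : ∀ v : E, (0 : ℝ) ≤ ∑ k ∈ (b.repr v).support, ‖b.repr v k‖ ^ p :=
    fun v => Finset.sum_nonneg fun k _ => Real.rpow_nonneg (norm_nonneg _) p
  have hn0 : ∀ v : E, 0 ≤ n v := fun v => Real.rpow_nonneg (hsum0 v) _
  -- Lemma A: each coordinate is bounded by the norm
  have hA : ∀ (v : E) (k : ι), ‖b.repr v k‖ ≤ n v := by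
    intro v k
    by_cases h : b.repr v k = 0
    · simpa [h] using hn0 v
    · have hk : k ∈ (b.repr v).support := Finsupp.mem_support_iff.2 h
      have h1 : ‖b.repr v k‖ ^ p ≤ ∑ j ∈ (b.repr v).support, ‖b.repr v j‖ ^ p :=
        Finset.single_le_sum (fun j _ => Real.rpow_nonneg (norm_nonneg _) p) hk
      calc ‖b.repr v k‖ = (‖b.repr v k‖ ^ p) ^ (1 / p) := by
            rw [one_div, Real.rpow_rpow_inv (norm_nonneg _) hpne]
        _ ≤ (∑ j ∈ (b.repr v).support, ‖b.repr v j‖ ^ p) ^ (1 / p) :=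
            Real.rpow_le_rpow (Real.rpow_nonneg (norm_nonneg _) _) h1 (by positivity)
        _ = n v := by rw [hn]
  -- Lemma B: the norm is bounded by the ℓ¹-sum over any finset containing the support
  have hB : ∀ (v : E) (s : Finset ι), (b.repr v).support ⊆ s →
      n v ≤ ∑ k ∈ s, ‖b.repr v k‖ := by
    intro v s hs
    have h1 : ∑ k ∈ (b.repr v).support, ‖b.repr v k‖ ^ p = ∑ k ∈ s, ‖b.repr v k‖ ^ p :=
      Finset.sum_subset hs fun x _ hx => by
        simp [Finsupp.notMem_support_iff.1 hx, Real.zero_rpow hpne]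
    have h2 : (0 : ℝ) ≤ ∑ k ∈ s, ‖b.repr v k‖ := Finset.sum_nonneg fun k _ => norm_nonneg _
    calc n v = (∑ k ∈ s, ‖b.repr v k‖ ^ p) ^ (1 / p) := by rw [hn]; simp only; rw [h1]
      _ ≤ ((∑ k ∈ s, ‖b.repr v k‖) ^ p) ^ (1 / p) :=
          Real.rpow_le_rpow (Finset.sum_nonneg fun k _ => Real.rpow_nonneg (norm_nonneg _) p)
            (sumRpowLe hp s _ fun i => norm_nonneg _) (by positivity)
      _ = ∑ k ∈ s, ‖b.repr v k‖ := by rw [one_div, Real.rpow_rpow_inv h2 hpne]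
  constructor
  · -- completeness implies finite dimension
    intro hC
    have hfin : Finite ι := by
      by_contra hfi
      have : Infinite ι := not_finite_iff_infinite.mp hfi
      let f := Infinite.natEmbedding ι
      let c : ℕ → 𝕜 := fun i => ((2 : 𝕜)⁻¹) ^ i
      have hcnorm : ∀ i, ‖c i‖ = ((2 : ℝ)⁻¹) ^ i := by
        intro i
        simp [c, norm_pow, norm_inv, RCLike.norm_two]
      let u : ℕ → E := fun m => ∑ i ∈ Finset.range m, c i • b (f i)
      have hrepr : ∀ (m : ℕ) (j : ℕ), b.repr (u m) (f j) = if j < m then c j else 0 := by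
        intro m j
        have : b.repr (u m) (f j)
            = ∑ i ∈ Finset.range m, (Finsupp.single (f i) (c i)) (f j) := by
          simp [u, map_sum, Finsupp.smul_single]
        rw [this]
        have : ∀ i ∈ Finset.range m,
            (Finsupp.single (f i) (c i)) (f j) = if i = j then c i else 0 := by
          intro i _
          rw [Finsupp.single_apply]
          simp [f.injective.eq_iff]
        rw [Finset.sum_congr rfl this, Finset.sum_ite_eq' (Finset.range m) j c]
        simp [Finset.mem_range]
      have hrepr0 : ∀ (m : ℕ) (j : ι), j ∉ (Finset.range m).image f → b.repr (u m) j = 0 := by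
        intro m j hj
        have : b.repr (u m) j = ∑ i ∈ Finset.range m, (Finsupp.single (f i) (c i)) j := by
          simp [u, map_sum, Finsupp.smul_single]
        rw [this]
        refine Finset.sum_eq_zero fun i hi => ?_
        rw [Finsupp.single_apply, if_neg]
        intro h
        exact hj (Finset.mem_image.2 ⟨i, hi, h⟩)
      have hsupp : ∀ m, (b.repr (u m)).support ⊆ (Finset.range m).image f := by
        intro m j hj
        by_contra h
        exact Finsupp.mem_support_iff.1 hj (hrepr0 m j h)
      -- u is Cauchy
      have hu : IsCauchyWith n u := by
        intro ε hε
        obtain ⟨N, hNε⟩ : ∃ N : ℕ, ((2 : ℝ)⁻¹) ^ N < ε / 4 := by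
          obtain ⟨N, hN⟩ := exists_pow_lt_of_lt_one (show (0 : ℝ) < ε / 4 by positivity)
            (by norm_num : (2 : ℝ)⁻¹ < 1)
          exact ⟨N, hN⟩
        refine ⟨N, fun m hm k hk => ?_⟩
        set M := max m k with hM
        have hsub : (b.repr (u m - u k)).support ⊆ (Finset.range M).image f := by
          rw [map_sub]
          refine (Finsupp.support_sub).trans ?_
          apply Finset.union_subset
          · exact (hsupp m).trans (Finset.image_subset_image
              (Finset.range_subset_range.2 (le_max_left m k)))
          · exact (hsupp k).trans (Finset.image_subset_image
              (Finset.range_subset_range.2 (le_max_right m k)))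
        have h1 : n (u m - u k) ≤ ∑ j ∈ (Finset.range M).image f, ‖b.repr (u m - u k) j‖ :=
          hB _ _ hsub
        have h2 : ∑ j ∈ (Finset.range M).image f, ‖b.repr (u m - u k) j‖
            = ∑ i ∈ Finset.range M, ‖b.repr (u m - u k) (f i)‖ :=
          Finset.sum_image fun x _ y _ h => f.injective h
        have hterm : ∀ i ∈ Finset.range M, ‖b.repr (u m - u k) (f i)‖
            ≤ if i < N then 0 else 2 * ((2 : ℝ)⁻¹) ^ i := by
          intro i _
          have hval : b.repr (u m - u k) (f i)
              = (if i < m then c i else 0) - (if i < k then c i else 0) := by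
            rw [map_sub, Finsupp.sub_apply, hrepr, hrepr]
          by_cases hi : i < N
          · have h1 : i < m := lt_of_lt_of_le hi hm
            have h2 : i < k := lt_of_lt_of_le hi hk
            rw [hval, if_pos h1, if_pos h2, sub_self, norm_zero, if_pos hi]
          · rw [if_neg hi, hval]
            have hb1 : ‖(if i < m then c i else 0 : 𝕜)‖ ≤ ((2 : ℝ)⁻¹) ^ i := by
              by_cases h : i < m
              · rw [if_pos h, hcnorm]
              · rw [if_neg h, norm_zero]; positivity
            have hb2 : ‖(if i < k then c i else 0 : 𝕜)‖ ≤ ((2 : ℝ)⁻¹) ^ i := by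
              by_cases h : i < k
              · rw [if_pos h, hcnorm]
              · rw [if_neg h, norm_zero]; positivity
            calc ‖(if i < m then c i else 0 : 𝕜) - (if i < k then c i else 0)‖
                ≤ ‖(if i < m then c i else 0 : 𝕜)‖ + ‖(if i < k then c i else 0 : 𝕜)‖ :=
                  norm_sub_le _ _
              _ ≤ ((2 : ℝ)⁻¹) ^ i + ((2 : ℝ)⁻¹) ^ i := add_le_add hb1 hb2
              _ = 2 * ((2 : ℝ)⁻¹) ^ i := by ring
        have h3 : ∑ i ∈ Finset.range M, ‖b.repr (u m - u k) (f i)‖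
            ≤ ∑ i ∈ Finset.range M, (if i < N then 0 else 2 * ((2 : ℝ)⁻¹) ^ i) :=
          Finset.sum_le_sum hterm
        have h4 : ∑ i ∈ Finset.range M, (if i < N then 0 else 2 * ((2 : ℝ)⁻¹) ^ i)
            ≤ 4 * ((2 : ℝ)⁻¹) ^ N := by
          rcases le_or_gt N M with hNM | hNM
          · rw [Finset.range_eq_Ico, ← Finset.sum_Ico_consecutive _ (Nat.zero_le N) hNM]
            have e1 : ∑ i ∈ Finset.Ico 0 N, (if i < N then 0 else 2 * ((2 : ℝ)⁻¹) ^ i) = 0 :=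
              Finset.sum_eq_zero fun i hi => by
                rw [if_pos (Finset.mem_Ico.1 hi).2]
            have e2 : ∑ i ∈ Finset.Ico N M, (if i < N then 0 else 2 * ((2 : ℝ)⁻¹) ^ i)
                = ∑ i ∈ Finset.Ico N M, 2 * ((2 : ℝ)⁻¹) ^ i :=
              Finset.sum_congr rfl fun i hi => by
                rw [if_neg (not_lt.2 (Finset.mem_Ico.1 hi).1)]
            rw [e1, e2, zero_add]
            have e3 : ∑ i ∈ Finset.Ico N M, 2 * ((2 : ℝ)⁻¹) ^ i
                = 2 * ((2 : ℝ)⁻¹) ^ N * ∑ j ∈ Finset.range (M - N), ((2 : ℝ)⁻¹) ^ j := by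
              rw [Finset.sum_Ico_eq_sum_range, Finset.mul_sum]
              exact Finset.sum_congr rfl fun j _ => by rw [pow_add]; ring
            rw [e3]
            have e4 : ∑ j ∈ Finset.range (M - N), ((2 : ℝ)⁻¹) ^ j ≤ 2 := by
              have := sum_geometric_two_le (M - N)
              simpa [one_div] using this
            have h5 : (0 : ℝ) ≤ 2 * ((2 : ℝ)⁻¹) ^ N := by positivity
            calc 2 * ((2 : ℝ)⁻¹) ^ N * ∑ j ∈ Finset.range (M - N), ((2 : ℝ)⁻¹) ^ j
                ≤ 2 * ((2 : ℝ)⁻¹) ^ N * 2 := by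
                  exact mul_le_mul_of_nonneg_left e4 h5
              _ = 4 * ((2 : ℝ)⁻¹) ^ N := by ring
          · have : ∀ i ∈ Finset.range M, (if i < N then 0 else 2 * ((2 : ℝ)⁻¹) ^ i) = 0 := by
              intro i hi
              rw [if_pos (lt_of_lt_of_le (Finset.mem_range.1 hi) hNM.le)]
            rw [Finset.sum_congr rfl this, Finset.sum_const, smul_zero]
            positivity
        calc n (u m - u k) ≤ ∑ i ∈ Finset.range M, ‖b.repr (u m - u k) (f i)‖ := by
              rw [← h2]; exact h1
          _ ≤ ∑ i ∈ Finset.range M, (if i < N then 0 else 2 * ((2 : ℝ)⁻¹) ^ i) := h3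
          _ ≤ 4 * ((2 : ℝ)⁻¹) ^ N := h4
          _ < ε := by linarith
      obtain ⟨l, hl⟩ := hC u hu
      -- every f i lies in the support of b.repr l : contradiction with finiteness
      have hmem : ∀ i : ℕ, f i ∈ (b.repr l).support := by
        intro i
        rw [Finsupp.mem_support_iff]
        intro h0
        have hci : (0 : ℝ) < ‖c i‖ := by rw [hcnorm]; positivity
        obtain ⟨N, hN⟩ := hl ‖c i‖ hci
        set m := max N (i + 1) with hm
        have h1 : ‖b.repr (u m - l) (f i)‖ ≤ n (u m - l) := hA _ _
        have h2 : n (u m - l) < ‖c i‖ := hN m (le_max_left _ _)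
        have h3 : b.repr (u m - l) (f i) = c i := by
          rw [map_sub, Finsupp.sub_apply, hrepr, h0, sub_zero,
            if_pos (lt_of_lt_of_le (Nat.lt_succ_self i) (le_max_right N (i + 1)))]
        rw [h3] at h1
        linarith
      have hinj : Function.Injective (fun i : ℕ => (⟨f i, hmem i⟩ : (b.repr l).support)) := by
        intro a b hab
        exact f.injective (congrArg Subtype.val hab)
      haveI : Finite ℕ := Finite.of_injective _ hinj
      exact not_finite ℕ
    exact Module.Finite.of_basis b
  · -- finite dimension implies completeness
    intro hfd
    haveI : Fintype ι := FiniteDimensional.fintypeBasisIndex b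
    intro u hu
    -- each coordinate sequence is Cauchy in 𝕜
    have hck : ∀ k : ι, CauchySeq (fun m => b.repr (u m) k) := by
      intro k
      rw [Metric.cauchySeq_iff]
      intro ε hε
      obtain ⟨N, hN⟩ := hu ε hε
      refine ⟨N, fun m hm j hj => ?_⟩
      have h1 : ‖b.repr (u m - u j) k‖ ≤ n (u m - u j) := hA _ _
      rw [map_sub, Finsupp.sub_apply] at h1
      calc dist (b.repr (u m) k) (b.repr (u j) k)
          = ‖b.repr (u m) k - b.repr (u j) k‖ := dist_eq_norm _ _
        _ ≤ n (u m - u j) := h1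
        _ < ε := hN m hm j hj
    choose c hc using fun k => cauchySeq_tendsto_of_complete (hck k)
    refine ⟨∑ k, c k • b k, ?_⟩
    have hlrepr : ∀ k, b.repr (∑ k, c k • b k) k = c k := by
      intro k
      rw [Module.Basis.repr_sum_self]
    intro ε hε
    set δ := ε / (Fintype.card ι + 1) with hδdef
    have hδ : (0 : ℝ) < δ := by positivity
    have hNk : ∀ k : ι, ∃ N : ℕ, ∀ m ≥ N, ‖b.repr (u m) k - c k‖ < δ := by
      intro k
      have := (Metric.tendsto_atTop.1 (hc k)) δ hδ
      obtain ⟨N, hN⟩ := this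
      exact ⟨N, fun m hm => by
        have := hN m hm
        rwa [dist_eq_norm] at this⟩
    choose N hN using hNk
    refine ⟨Finset.univ.sup N, fun m hm => ?_⟩
    have hle : ∀ k : ι, N k ≤ m :=
      fun k => le_trans (Finset.le_sup (Finset.mem_univ k)) hm
    calc n (u m - ∑ k, c k • b k)
        ≤ ∑ k, ‖b.repr (u m - ∑ k, c k • b k) k‖ := hB _ Finset.univ (Finset.subset_univ _)
      _ ≤ ∑ _k : ι, δ := by
          refine Finset.sum_le_sum fun k _ => ?_
          rw [map_sub, Finsupp.sub_apply, hlrepr]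
          exact (hN k m (hle k)).le
      _ = (Fintype.card ι : ℝ) * δ := by
          rw [Finset.sum_const, Finset.card_univ, nsmul_eq_mul]
      _ < ε := by
          rw [hδdef]
          rw [div_eq_inv_mul]
          have hcard : (Fintype.card ι : ℝ) < Fintype.card ι + 1 := by linarith
          have h1 : (0 : ℝ) < (Fintype.card ι : ℝ) + 1 := by positivity
          calc (Fintype.card ι : ℝ) * (((Fintype.card ι : ℝ) + 1)⁻¹ * ε)
              < ((Fintype.card ι : ℝ) + 1) * (((Fintype.card ι : ℝ) + 1)⁻¹ * ε) := by
                apply mul_lt_mul_of_pos_right hcard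
                positivity
            _ = ε := by field_simp
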